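/- (First-variation conditions for the spherical pendulum.) Fix m, l, g > 0, ρ ∈ ℝ with ρ ≠ 0 and ρ ≠ m, c ∈ ℝ, and a differentiable function Φ : ℝ³ → ℝ. On ℝ⁸ with coordinates (Ω₁, Ω₂, v, Γ) ∈ ℝ × ℝ × ℝ³ × ℝ³, define p = (ρ v₁ + m l Ω₂, ρ v₂ − m l Ω₁, ρ v₃), E⁰ = ½ m l² (Ω₁² + Ω₂²) + m l (v₁ Ω₂ − v₂ Ω₁) + ½ ρ ‖v‖² + m g l Γ₃, 𝓔 = ½ m l² (Ω₁² + Ω₂²) + m (ρ/(ρ − m)) g l Γ₃, and E = E⁰ + c 𝓔 + Φ(‖p‖², p·Γ, ‖Γ‖²). Then the derivative of E vanishes at the equilibrium (Ω₁, Ω₂, v, Γ) = (0, 0, 0, e₃) if and only if D₂Φ(0,0,1) = 0 and D₃Φ(0,0,1) = m g l (m − (1 + c) ρ)/(2(ρ − m)), where D₂Φ and D₃Φ denote the partial derivatives of Φ in its second and third arguments. -/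

import Mathlib

set_option maxHeartbeats 1000000


open Matrix

/-- The energy–Casimir function `E = E⁰ + c 𝓔 + Φ(‖p‖², p·Γ, ‖Γ‖²)` for the spherical
pendulum on a movable base, on `ℝ⁸` with coordinates `(Ω₁, Ω₂, v, Γ)`, where
`p = (ρv₁ + mlΩ₂, ρv₂ − mlΩ₁, ρv₃)`,
`E⁰ = ½ml²(Ω₁² + Ω₂²) + ml(v₁Ω₂ − v₂Ω₁) + ½ρ‖v‖² + mglΓ₃` and
`𝓔 = ½ml²(Ω₁² + Ω₂²) + m(ρ/(ρ−m))glΓ₃`. -/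
noncomputable def ECfun (m l g ρ c : ℝ) (Φ : (Fin 3 → ℝ) → ℝ)
    (x : ℝ × ℝ × (Fin 3 → ℝ) × (Fin 3 → ℝ)) : ℝ :=
  let Ω₁ := x.1; let Ω₂ := x.2.1; let v := x.2.2.1; let Γ := x.2.2.2
  let p : Fin 3 → ℝ := ![ρ * v 0 + m * l * Ω₂, ρ * v 1 - m * l * Ω₁, ρ * v 2]
  (1 / 2) * m * l ^ 2 * (Ω₁ ^ 2 + Ω₂ ^ 2) + m * l * (v 0 * Ω₂ - v 1 * Ω₁)
    + (1 / 2) * ρ * (v ⬝ᵥ v) + m * g * l * Γ 2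
    + c * ((1 / 2) * m * l ^ 2 * (Ω₁ ^ 2 + Ω₂ ^ 2) + m * (ρ / (ρ - m)) * g * l * Γ 2)
    + Φ ![p ⬝ᵥ p, p ⬝ᵥ Γ, Γ ⬝ᵥ Γ]

private lemma hasDerivAt_quadratic (u v s : ℝ) :
    HasDerivAt (fun t : ℝ => u + v * t + s * t ^ 2) v 0 := by
  have h1 : HasDerivAt (fun t : ℝ => v * t) v 0 := by
    simpa using (hasDerivAt_id (0 : ℝ)).const_mul v
  have h2 : HasDerivAt (fun t : ℝ => s * t ^ 2) 0 0 := by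
    simpa using (hasDerivAt_pow 2 (0 : ℝ)).const_mul s
  have h3 := (h1.const_add u).add h2
  rw [add_zero] at h3
  exact h3

private lemma hasDerivAt_vec3 (u1 v1 s1 u2 v2 s2 u3 v3 s3 : ℝ) :
    HasDerivAt (fun t : ℝ => (![u1 + v1 * t + s1 * t ^ 2, u2 + v2 * t + s2 * t ^ 2,
        u3 + v3 * t + s3 * t ^ 2] : Fin 3 → ℝ)) (![v1, v2, v3] : Fin 3 → ℝ) 0 := by
  rw [hasDerivAt_pi]
  intro i
  fin_cases i
  · exact hasDerivAt_quadratic u1 v1 s1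
  · exact hasDerivAt_quadratic u2 v2 s2
  · exact hasDerivAt_quadratic u3 v3 s3

private lemma vec3_decomp (u v w : ℝ) :
    (![u, v, w] : Fin 3 → ℝ) = u • (Pi.single 0 1 : Fin 3 → ℝ)
      + v • (Pi.single 1 1 : Fin 3 → ℝ) + w • (Pi.single 2 1 : Fin 3 → ℝ) := by
  funext i; fin_cases i <;> simp

/-- First-variation conditions for the spherical pendulum: the derivative of the
energy–Casimir function vanishes at the upright equilibrium `(0, 0, 0, e₃)` iff
`D₂Φ(0,0,1) = 0` and `D₃Φ(0,0,1) = mgl(m − (1+c)ρ)/(2(ρ−m))`. -/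
theorem sphPend_first_variation (m l g ρ c : ℝ) (hm : 0 < m) (hl : 0 < l) (hg : 0 < g)
    (hρ : ρ ≠ 0) (hρm : ρ ≠ m) (Φ : (Fin 3 → ℝ) → ℝ) (hΦ : Differentiable ℝ Φ) :
    fderiv ℝ (ECfun m l g ρ c Φ) (0, 0, 0, ![(0 : ℝ), 0, 1]) = 0 ↔
      (fderiv ℝ Φ ![(0 : ℝ), 0, 1] (Pi.single 1 1) = 0 ∧
       fderiv ℝ Φ ![(0 : ℝ), 0, 1] (Pi.single 2 1)
          = m * g * l * (m - (1 + c) * ρ) / (2 * (ρ - m))) := by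
  have hρm' : ρ - m ≠ 0 := sub_ne_zero.mpr hρm
  set pt : Fin 3 → ℝ := ![(0 : ℝ), 0, 1] with hpt
  set x₀ : ℝ × ℝ × (Fin 3 → ℝ) × (Fin 3 → ℝ) := (0, 0, 0, pt) with hx₀
  set D₂ : ℝ := fderiv ℝ Φ pt (Pi.single 1 1) with hD₂
  set D₃ : ℝ := fderiv ℝ Φ pt (Pi.single 2 1) with hD₃
  set M : ℝ := m * g * l + c * (m * (ρ / (ρ - m)) * g * l) with hM
  -- differentiability of the energy-Casimir function
  have hF : Differentiable ℝ (fun x : ℝ × ℝ × (Fin 3 → ℝ) × (Fin 3 → ℝ) =>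
      (![(![ρ * x.2.2.1 0 + m * l * x.2.1, ρ * x.2.2.1 1 - m * l * x.1, ρ * x.2.2.1 2] : Fin 3 → ℝ)
            ⬝ᵥ ![ρ * x.2.2.1 0 + m * l * x.2.1, ρ * x.2.2.1 1 - m * l * x.1, ρ * x.2.2.1 2],
          (![ρ * x.2.2.1 0 + m * l * x.2.1, ρ * x.2.2.1 1 - m * l * x.1, ρ * x.2.2.1 2] : Fin 3 → ℝ)
            ⬝ᵥ x.2.2.2,
          x.2.2.2 ⬝ᵥ x.2.2.2] : Fin 3 → ℝ)) := by
    rw [differentiable_pi]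
    intro i
    fin_cases i <;>
      [skip; skip; skip] <;>
      (simp [dotProduct, Fin.sum_univ_three]; fun_prop)
  have hE : Differentiable ℝ (ECfun m l g ρ c Φ) := by
    have hpoly : Differentiable ℝ (fun x : ℝ × ℝ × (Fin 3 → ℝ) × (Fin 3 → ℝ) =>
        (1 / 2) * m * l ^ 2 * (x.1 ^ 2 + x.2.1 ^ 2)
          + m * l * (x.2.2.1 0 * x.2.1 - x.2.2.1 1 * x.1)
          + (1 / 2) * ρ * (x.2.2.1 ⬝ᵥ x.2.2.1) + m * g * l * x.2.2.2 2
          + c * ((1 / 2) * m * l ^ 2 * (x.1 ^ 2 + x.2.1 ^ 2)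
              + m * (ρ / (ρ - m)) * g * l * x.2.2.2 2)) := by
      simp only [dotProduct, Fin.sum_univ_three]
      fun_prop
    exact hpoly.add (hΦ.comp hF)
  -- directional derivative formula
  have key : ∀ δ : ℝ × ℝ × (Fin 3 → ℝ) × (Fin 3 → ℝ),
      fderiv ℝ (ECfun m l g ρ c Φ) x₀ δ
        = M * δ.2.2.2 2 + ρ * δ.2.2.1 2 * D₂ + 2 * δ.2.2.2 2 * D₃ := by
    rintro ⟨a, b, w, γ⟩
    set δ : ℝ × ℝ × (Fin 3 → ℝ) × (Fin 3 → ℝ) := (a, b, w, γ) with hδ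
    have hline : HasDerivAt (fun t : ℝ => x₀ + t • δ) δ 0 := by
      simpa using ((hasDerivAt_id (0 : ℝ)).smul_const δ).const_add x₀
    have hcomp : HasDerivAt (fun t : ℝ => ECfun m l g ρ c Φ (x₀ + t • δ))
        (fderiv ℝ (ECfun m l g ρ c Φ) x₀ δ) 0 := by
      exact (hE x₀).hasFDerivAt.comp_hasDerivAt_of_eq 0 hline (by simp)
    -- explicit form of the curve
    set P : ℝ := (ρ * w 0 + m * l * b) ^ 2 + (ρ * w 1 - m * l * a) ^ 2 + (ρ * w 2) ^ 2 with hP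
    set Q : ℝ := (ρ * w 0 + m * l * b) * γ 0 + (ρ * w 1 - m * l * a) * γ 1 + ρ * w 2 * γ 2 with hQ
    set R : ℝ := γ 0 ^ 2 + γ 1 ^ 2 + γ 2 ^ 2 with hR
    set A2 : ℝ := (1 + c) * ((1 / 2) * m * l ^ 2 * (a ^ 2 + b ^ 2)) + m * l * (w 0 * b - w 1 * a)
      + (1 / 2) * ρ * (w 0 ^ 2 + w 1 ^ 2 + w 2 ^ 2) with hA2
    have heq : (fun t : ℝ => ECfun m l g ρ c Φ (x₀ + t • δ))
        = fun t : ℝ => (M + (M * γ 2) * t + A2 * t ^ 2)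
          + Φ ![0 + 0 * t + P * t ^ 2, 0 + (ρ * w 2) * t + Q * t ^ 2,
              1 + (2 * γ 2) * t + R * t ^ 2] := by
      funext t
      simp only [ECfun, hx₀, hδ, Prod.fst_add, Prod.snd_add, Prod.smul_fst, Prod.smul_snd,
        Pi.add_apply, Pi.smul_apply, smul_eq_mul, hpt, Matrix.cons_val_zero, Matrix.cons_val_one,
        Matrix.head_cons, Matrix.cons_val_two, Matrix.tail_cons, dotProduct, Fin.sum_univ_three,
        Pi.zero_apply, hM, hA2]
      congr 1
      · ring
      · congr 1
        funext i
        fin_cases i <;> simp [hP, hQ, hR] <;> ring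
    have hA : HasDerivAt (fun t : ℝ => M + (M * γ 2) * t + A2 * t ^ 2) (M * γ 2) 0 :=
      hasDerivAt_quadratic _ _ _
    have hcv : HasDerivAt (fun t : ℝ => (![0 + 0 * t + P * t ^ 2, 0 + (ρ * w 2) * t + Q * t ^ 2,
        1 + (2 * γ 2) * t + R * t ^ 2] : Fin 3 → ℝ)) (![0, ρ * w 2, 2 * γ 2] : Fin 3 → ℝ) 0 :=
      hasDerivAt_vec3 0 0 P 0 (ρ * w 2) Q 1 (2 * γ 2) R
    have hΦf : HasFDerivAt Φ (fderiv ℝ Φ pt) pt := (hΦ pt).hasFDerivAt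
    have hΦc : HasDerivAt (fun t : ℝ => Φ ![0 + 0 * t + P * t ^ 2, 0 + (ρ * w 2) * t + Q * t ^ 2,
        1 + (2 * γ 2) * t + R * t ^ 2]) (fderiv ℝ Φ pt (![0, ρ * w 2, 2 * γ 2] : Fin 3 → ℝ)) 0 := by
      have h0 : (![0 + 0 * (0:ℝ) + P * 0 ^ 2, 0 + (ρ * w 2) * 0 + Q * 0 ^ 2,
          1 + (2 * γ 2) * 0 + R * 0 ^ 2] : Fin 3 → ℝ) = pt := by
        funext i; fin_cases i <;> norm_num [hpt]
      exact hΦf.comp_hasDerivAt_of_eq 0 hcv h0.symm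
    have htot : HasDerivAt (fun t : ℝ => ECfun m l g ρ c Φ (x₀ + t • δ))
        (M * γ 2 + fderiv ℝ Φ pt (![0, ρ * w 2, 2 * γ 2] : Fin 3 → ℝ)) 0 := by
      rw [heq]; exact hA.add hΦc
    have huniq := hcomp.unique htot
    rw [huniq, vec3_decomp]
    simp only [map_add, _root_.map_smul, smul_eq_mul, ← hD₂, ← hD₃]
    ring
  constructor
  · intro h
    have h1 := key (0, 0, Pi.single 2 1, 0)
    have h2 := key (0, 0, 0, Pi.single 2 1)
    rw [h] at h1 h2
    simp only [ContinuousLinearMap.zero_apply, Pi.single_eq_same, Pi.zero_apply,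
      mul_zero, zero_mul, mul_one, add_zero, zero_add] at h1 h2
    have hD₂0 : D₂ = 0 := by
      rcases mul_eq_zero.mp h1.symm with h | h
      · exact absurd h hρ
      · exact h
    refine ⟨hD₂0, ?_⟩
    have : M + 2 * D₃ = 0 := by linarith [h2.symm]
    rw [hM] at this
    field_simp at this ⊢
    linarith
  · rintro ⟨h2, h3⟩
    apply ContinuousLinearMap.ext
    intro δ
    rw [key δ, h2, h3]
    simp only [ContinuousLinearMap.zero_apply, hM]
    field_simp
    ring
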